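/- A formula is a tautology if and only if it is provable in the system with axiom A ∨ ¬A ∨ B̄ and rules permutation, associativity, double negation introduction, and De Morgan. -/

import Mathlib

/-- Propositional formulas built from letters by negation and disjunction. -/
inductive Fm where
  | letter : ℕ → Fm
  | neg : Fm → Fm
  | or : Fm → Fm → Fm
deriving DecidableEq

/-- Boolean evaluation under a valuation of the letters. -/
def Fm.eval (v : ℕ → Bool) : Fm → Bool
  | .letter n => v n
  | .neg a => !(a.eval v)
  | .or a b => a.eval v || b.eval v

/-- A formula is a tautology if it is true under every valuation. -/
def Taut (A : Fm) : Prop := ∀ v : ℕ → Bool, A.eval v = true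

/-- Right-associated disjunction `A ∨ B₁ ∨ ⋯ ∨ Bₙ` (the list possibly empty). -/
def disj : Fm → List Fm → Fm
  | A, [] => A
  | A, B :: l => .or A (disj B l)

/-- Provability: axiom scheme `A ∨ ¬A ∨ B̄`, rules: permutation of disjuncts,
associativity, double negation introduction, De Morgan. -/
inductive Prov : Fm → Prop where
  | ax (A : Fm) (l : List Fm) : Prov (disj A (.neg A :: l))
  | perm (A B : Fm) (l l' : List Fm) : (A :: l).Perm (B :: l') →
      Prov (disj A l) → Prov (disj B l')
  | assoc (A B : Fm) (l : List Fm) :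
      Prov (disj A (B :: l)) → Prov (disj (.or A B) l)
  | dneg (A : Fm) (l : List Fm) :
      Prov (disj A l) → Prov (disj (.neg (.neg A)) l)
  | demorgan (A B : Fm) (l : List Fm) :
      Prov (disj (.neg A) l) → Prov (disj (.neg B) l) →
      Prov (disj (.neg (.or A B)) l)

lemma eval_disj (v : ℕ → Bool) : ∀ (A : Fm) (l : List Fm),
    (disj A l).eval v = (A.eval v || l.any (fun B => B.eval v)) := by
  intro A l
  induction l generalizing A with
  | nil => simp [disj]
  | cons B t ih => simp [disj, Fm.eval, ih B, Bool.or_assoc]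

lemma disj_true (v : ℕ → Bool) (A : Fm) (l : List Fm) :
    (disj A l).eval v = true ↔ ∃ B ∈ A :: l, B.eval v = true := by
  rw [eval_disj]; simp

lemma sound {F : Fm} (h : Prov F) : Taut F := by
  induction h with
  | ax A l =>
    intro v
    rw [disj_true]
    cases h : A.eval v with
    | true => exact ⟨A, by simp, h⟩
    | false => exact ⟨.neg A, by simp, by simp [Fm.eval, h]⟩
  | perm A B l l' hp _ ih =>
    intro v
    rw [disj_true]
    obtain ⟨C, hC, hCe⟩ := (disj_true v A l).mp (ih v)
    exact ⟨C, hp.subset hC, hCe⟩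
  | assoc A B l _ ih =>
    intro v
    rw [disj_true]
    obtain ⟨C, hC, hCe⟩ := (disj_true v A (B :: l)).mp (ih v)
    rcases List.mem_cons.mp hC with rfl | hC
    · exact ⟨.or C B, by simp, by simp [Fm.eval, hCe]⟩
    rcases List.mem_cons.mp hC with rfl | hC
    · exact ⟨.or A C, by simp, by simp [Fm.eval, hCe]⟩
    · exact ⟨C, by simp [hC], hCe⟩
  | dneg A l _ ih =>
    intro v
    rw [disj_true]
    obtain ⟨C, hC, hCe⟩ := (disj_true v A l).mp (ih v)
    rcases List.mem_cons.mp hC with rfl | hC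
    · exact ⟨.neg (.neg C), by simp, by simp [Fm.eval, hCe]⟩
    · exact ⟨C, by simp [hC], hCe⟩
  | demorgan A B l _ _ ih1 ih2 =>
    intro v
    rw [disj_true]
    obtain ⟨C, hC, hCe⟩ := (disj_true v (.neg A) l).mp (ih1 v)
    rcases List.mem_cons.mp hC with rfl | hC
    · obtain ⟨D, hD, hDe⟩ := (disj_true v (.neg B) l).mp (ih2 v)
      rcases List.mem_cons.mp hD with rfl | hD
      · refine ⟨.neg (.or A B), by simp, ?_⟩
        simp [Fm.eval] at hCe hDe ⊢
        simp [hCe, hDe]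
      · exact ⟨D, by simp [hD], hDe⟩
    · exact ⟨C, by simp [hC], hCe⟩

/-- size measure -/
def siz : Fm → ℕ
  | .letter _ => 0
  | .neg a => siz a + 1
  | .or a b => siz a + siz b + 1

def msr (l : List Fm) : ℕ := (l.map siz).sum

lemma msr_perm {l l' : List Fm} (h : l.Perm l') : msr l = msr l' :=
  (h.map siz).sum_eq

/-- reducible formulas -/
def Red : Fm → Prop
  | .or _ _ => True
  | .neg (.neg _) => True
  | .neg (.or _ _) => True
  | _ => False

lemma not_red {B : Fm} (h : ¬ Red B) :
    (∃ n, B = .letter n) ∨ (∃ n, B = .neg (.letter n)) := by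
  match B with
  | .letter n => exact .inl ⟨n, rfl⟩
  | .neg (.letter n) => exact .inr ⟨n, rfl⟩
  | .or a b => exact absurd trivial h
  | .neg (.neg a) => exact absurd trivial h
  | .neg (.or a b) => exact absurd trivial h

lemma complete : ∀ n (A : Fm) (l : List Fm), msr (A :: l) ≤ n →
    (∀ v, ∃ B ∈ A :: l, B.eval v = true) → Prov (disj A l) := by
  intro n
  induction n using Nat.strong_induction_on with
  | _ n IH =>
  intro A l hm hT
  by_cases hred : ∃ B ∈ A :: l, Red B
  · obtain ⟨B, hB, hRB⟩ := hred
    set m := (A :: l).erase B with hmdef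
    have hp : (A :: l).Perm (B :: m) := List.perm_cons_erase hB
    have hmsr : msr (A :: l) = msr (B :: m) := msr_perm hp
    -- tautology transfer
    have hT' : ∀ v, B.eval v = true ∨ ∃ C ∈ m, C.eval v = true := by
      intro v
      obtain ⟨C, hC, hCe⟩ := hT v
      have : C ∈ B :: m := hp.subset hC
      rcases List.mem_cons.mp this with h | h
      · left; rw [← h]; exact hCe
      · right; exact ⟨C, h, hCe⟩
    have key : Prov (disj B m) := by
      match B, hRB with
      | .or P Q, _ =>
        apply Prov.assoc
        apply IH (msr (P :: Q :: m)) ?_ P (Q :: m) le_rfl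
        · intro v
          rcases hT' v with h | ⟨C, hC, hCe⟩
          · simp [Fm.eval] at h
            rcases h with h | h
            · exact ⟨P, by simp, h⟩
            · exact ⟨Q, by simp, h⟩
          · exact ⟨C, by simp [hC], hCe⟩
        · calc msr (P :: Q :: m) < msr (Fm.or P Q :: m) := by
                simp [msr, siz]; omega
            _ = msr (A :: l) := hmsr.symm
            _ ≤ n := hm
      | .neg (.neg P), _ =>
        apply Prov.dneg
        apply IH (msr (P :: m)) ?_ P m le_rfl
        · intro v
          rcases hT' v with h | ⟨C, hC, hCe⟩
          · simp [Fm.eval] at h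
            exact ⟨P, by simp, h⟩
          · exact ⟨C, by simp [hC], hCe⟩
        · calc msr (P :: m) < msr (Fm.neg (Fm.neg P) :: m) := by
                simp [msr, siz]
            _ = msr (A :: l) := hmsr.symm
            _ ≤ n := hm
      | .neg (.or P Q), _ =>
        apply Prov.demorgan
        · apply IH (msr (Fm.neg P :: m)) ?_ (.neg P) m le_rfl
          · intro v
            rcases hT' v with h | ⟨C, hC, hCe⟩
            · simp [Fm.eval] at h
              exact ⟨.neg P, by simp, by simp [Fm.eval, h.1]⟩
            · exact ⟨C, by simp [hC], hCe⟩
          · calc msr (Fm.neg P :: m) < msr (Fm.neg (Fm.or P Q) :: m) := by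
                  simp [msr, siz]
              _ = msr (A :: l) := hmsr.symm
              _ ≤ n := hm
        · apply IH (msr (Fm.neg Q :: m)) ?_ (.neg Q) m le_rfl
          · intro v
            rcases hT' v with h | ⟨C, hC, hCe⟩
            · simp [Fm.eval] at h
              exact ⟨.neg Q, by simp, by simp [Fm.eval, h.2]⟩
            · exact ⟨C, by simp [hC], hCe⟩
          · calc msr (Fm.neg Q :: m) < msr (Fm.neg (Fm.or P Q) :: m) := by
                  simp [msr, siz]
              _ = msr (A :: l) := hmsr.symm
              _ ≤ n := hm
    exact Prov.perm B A m l hp.symm key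
  · -- all literals
    push_neg at hred
    classical
    set L := A :: l with hL
    have hv := hT (fun n => decide (Fm.neg (Fm.letter n) ∈ L))
    obtain ⟨B, hB, hBe⟩ := hv
    rcases not_red (hred B hB) with ⟨k, rfl⟩ | ⟨k, rfl⟩
    · -- letter k true ⇒ neg (letter k) ∈ L
      simp [Fm.eval] at hBe
      -- hBe : .neg (.letter k) ∈ L
      have hnk : Fm.neg (Fm.letter k) ∈ L := hBe
      -- build proof
      have hk : Fm.letter k ∈ L := hB
      set m1 := L.erase (Fm.letter k) with hm1
      have hp1 : L.Perm (Fm.letter k :: m1) := List.perm_cons_erase hk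
      have hnk' : Fm.neg (Fm.letter k) ∈ m1 := by
        rw [hm1]
        exact (List.mem_erase_of_ne (by simp)).mpr hnk
      set m2 := m1.erase (Fm.neg (Fm.letter k)) with hm2
      have hp2 : m1.Perm (Fm.neg (Fm.letter k) :: m2) := List.perm_cons_erase hnk'
      have hp : L.Perm (Fm.letter k :: Fm.neg (Fm.letter k) :: m2) :=
        hp1.trans (List.Perm.cons _ hp2)
      exact Prov.perm (Fm.letter k) A (Fm.neg (Fm.letter k) :: m2) l hp.symm
        (Prov.ax (Fm.letter k) m2)
    · -- neg letter k true ⇒ neg (letter k) ∉ L, contradiction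
      simp [Fm.eval] at hBe
      exact absurd hB hBe

theorem taut_iff_prov (A : Fm) : Taut A ↔ Prov A := by
  constructor
  · intro h
    have := complete (msr [A]) A [] le_rfl (fun v => ⟨A, by simp, h v⟩)
    exact this
  · exact sound
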